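/- For every odd integer m ≥ 3, the independence number of J_m equals m − 1: there is an independent set of size m − 1 in J_m, and every independent set in J_m has at most m − 1 vertices. -/

import Mathlib

/-- Vertex set of the graph `J m`: `A = Fin m` (the `a_i`), `B = Fin m` (the `b_i`),
`C = Fin (m-1)` (the `c_i`), all 0-indexed. -/
abbrev JVert (m : ℕ) := Fin m ⊕ Fin m ⊕ Fin (m - 1)

/-- The vertex `a_{i+1}` (0-indexed `i`). -/
def Ja {m : ℕ} (i : Fin m) : JVert m := Sum.inl i
/-- The vertex `b_{i+1}` (0-indexed `i`). -/
def Jb {m : ℕ} (i : Fin m) : JVert m := Sum.inr (Sum.inl i)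
/-- The vertex `c_{i+1}` (0-indexed `i`). -/
def Jc {m : ℕ} (i : Fin (m - 1)) : JVert m := Sum.inr (Sum.inr i)

/-- The graph `J m`: two `m`-cycles on `A` and on `B`; each `c_i` joined to
`a_i, a_{i+1}, b_i, b_{i+1}`; and the two extra edges `a_1 b_1` and `a_m b_m`. -/
def JGraph (m : ℕ) : SimpleGraph (JVert m) :=
  SimpleGraph.fromRel (fun x y =>
    match x, y with
    | Sum.inl i, Sum.inl j => (j : ℕ) = ((i : ℕ) + 1) % m
    | Sum.inr (Sum.inl i), Sum.inr (Sum.inl j) => (j : ℕ) = ((i : ℕ) + 1) % m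
    | Sum.inr (Sum.inr i), Sum.inl j => (j : ℕ) = (i : ℕ) ∨ (j : ℕ) = (i : ℕ) + 1
    | Sum.inr (Sum.inr i), Sum.inr (Sum.inl j) => (j : ℕ) = (i : ℕ) ∨ (j : ℕ) = (i : ℕ) + 1
    | Sum.inl i, Sum.inr (Sum.inl j) =>
        ((i : ℕ) = 0 ∧ (j : ℕ) = 0) ∨ ((i : ℕ) = m - 1 ∧ (j : ℕ) = m - 1)
    | _, _ => False)

noncomputable instance {m : ℕ} : DecidableRel (JGraph m).Adj := Classical.decRel _

/-- `S` is a cut-set of `G`: the induced subgraph on the complement of `S`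
has at least two vertices and is not connected. -/
def IsCutset {V : Type*} (G : SimpleGraph V) (S : Set V) : Prop :=
  Sᶜ.Nontrivial ∧ ¬ (G.induce Sᶜ).Connected

/-- `s` is an independent set in `G`. -/
def IsIndepSet {V : Type*} (G : SimpleGraph V) (s : Set V) : Prop :=
  s.Pairwise fun u v => ¬ G.Adj u v

/-- Indicator of `a_{n+1} ∈ I`. -/
def aJ (m : ℕ) (I : Finset (JVert m)) (n : ℕ) : ℕ :=
  if h : n < m then (if Ja ⟨n, h⟩ ∈ I then 1 else 0) else 0

/-- Indicator of `b_{n+1} ∈ I`. -/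
def bJ (m : ℕ) (I : Finset (JVert m)) (n : ℕ) : ℕ :=
  if h : n < m then (if Jb ⟨n, h⟩ ∈ I then 1 else 0) else 0

/-- Indicator of `c_{n+1} ∈ I`. -/
def cJ (m : ℕ) (I : Finset (JVert m)) (n : ℕ) : ℕ :=
  if h : n < m - 1 then (if Jc ⟨n, h⟩ ∈ I then 1 else 0) else 0

/-- Weight of the edge `(n, n+1 mod m)`. -/
def wJ (m : ℕ) (I : Finset (JVert m)) (n : ℕ) : ℕ :=
  aJ m I n + aJ m I ((n + 1) % m) + bJ m I n + bJ m I ((n + 1) % m) + 2 * cJ m I n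

lemma aJ_le_one (m : ℕ) (I : Finset (JVert m)) (n : ℕ) : aJ m I n ≤ 1 := by
  unfold aJ; split
  · split <;> omega
  · omega

lemma bJ_le_one (m : ℕ) (I : Finset (JVert m)) (n : ℕ) : bJ m I n ≤ 1 := by
  unfold bJ; split
  · split <;> omega
  · omega

lemma cJ_le_one (m : ℕ) (I : Finset (JVert m)) (n : ℕ) : cJ m I n ≤ 1 := by
  unfold cJ; split
  · split <;> omega
  · omega

lemma aJ_eq_one_iff (m : ℕ) (I : Finset (JVert m)) {n : ℕ} (h : n < m) :
    aJ m I n = 1 ↔ Ja ⟨n, h⟩ ∈ I := by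
  unfold aJ; rw [dif_pos h]; split <;> simp_all

lemma bJ_eq_one_iff (m : ℕ) (I : Finset (JVert m)) {n : ℕ} (h : n < m) :
    bJ m I n = 1 ↔ Jb ⟨n, h⟩ ∈ I := by
  unfold bJ; rw [dif_pos h]; split <;> simp_all

lemma cJ_eq_one_iff (m : ℕ) (I : Finset (JVert m)) {n : ℕ} (h : n < m - 1) :
    cJ m I n = 1 ↔ Jc ⟨n, h⟩ ∈ I := by
  unfold cJ; rw [dif_pos h]; split <;> simp_all

lemma J_upper (m : ℕ) (hm : 3 ≤ m) (hodd : Odd m) (I : Finset (JVert m))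
    (hI : IsIndepSet (JGraph m) ↑I) : I.card ≤ m - 1 := by
  by_contra hcard
  push_neg at hcard
  have hIm : m ≤ I.card := by omega
  have hNo : ∀ u v : JVert m, u ∈ I → v ∈ I → (JGraph m).Adj u v → False := by
    intro u v hu hv hadj
    exact hI (Finset.mem_coe.mpr hu) (Finset.mem_coe.mpr hv) hadj.ne hadj
  -- the cycle constraints on A
  have hA : ∀ n : ℕ, n + 1 < m → aJ m I n + aJ m I (n + 1) ≤ 1 := by
    intro n hn
    by_contra hcon
    push_neg at hcon
    have h1 := aJ_le_one m I n
    have h2 := aJ_le_one m I (n + 1)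
    have e1 : aJ m I n = 1 := by omega
    have e2 : aJ m I (n + 1) = 1 := by omega
    have hn' : n < m := by omega
    refine hNo _ _ ((aJ_eq_one_iff m I hn').mp e1) ((aJ_eq_one_iff m I hn).mp e2) ?_
    rw [JGraph, SimpleGraph.fromRel_adj]
    constructor
    · simp only [Ja, ne_eq, Sum.inl.injEq, Fin.mk.injEq]
      omega
    · left
      show (n + 1) = (n + 1) % m
      rw [Nat.mod_eq_of_lt hn]
  have hA0 : aJ m I (m - 1) + aJ m I 0 ≤ 1 := by
    by_contra hcon
    push_neg at hcon
    have h1 := aJ_le_one m I (m - 1)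
    have h2 := aJ_le_one m I 0
    have e1 : aJ m I (m - 1) = 1 := by omega
    have e2 : aJ m I 0 = 1 := by omega
    have hn1 : m - 1 < m := by omega
    have hn2 : 0 < m := by omega
    refine hNo _ _ ((aJ_eq_one_iff m I hn1).mp e1) ((aJ_eq_one_iff m I hn2).mp e2) ?_
    rw [JGraph, SimpleGraph.fromRel_adj]
    constructor
    · simp only [Ja, ne_eq, Sum.inl.injEq, Fin.mk.injEq]
      omega
    · left
      show (0 : ℕ) = ((m - 1) + 1) % m
      have : m - 1 + 1 = m := by omega
      rw [this, Nat.mod_self]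
  have hB : ∀ n : ℕ, n + 1 < m → bJ m I n + bJ m I (n + 1) ≤ 1 := by
    intro n hn
    by_contra hcon
    push_neg at hcon
    have h1 := bJ_le_one m I n
    have h2 := bJ_le_one m I (n + 1)
    have e1 : bJ m I n = 1 := by omega
    have e2 : bJ m I (n + 1) = 1 := by omega
    have hn' : n < m := by omega
    refine hNo _ _ ((bJ_eq_one_iff m I hn').mp e1) ((bJ_eq_one_iff m I hn).mp e2) ?_
    rw [JGraph, SimpleGraph.fromRel_adj]
    constructor
    · simp only [Jb, ne_eq, Sum.inr.injEq, Sum.inl.injEq, Fin.mk.injEq]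
      omega
    · left
      show (n + 1) = (n + 1) % m
      rw [Nat.mod_eq_of_lt hn]
  have hB0 : bJ m I (m - 1) + bJ m I 0 ≤ 1 := by
    by_contra hcon
    push_neg at hcon
    have h1 := bJ_le_one m I (m - 1)
    have h2 := bJ_le_one m I 0
    have e1 : bJ m I (m - 1) = 1 := by omega
    have e2 : bJ m I 0 = 1 := by omega
    have hn1 : m - 1 < m := by omega
    have hn2 : 0 < m := by omega
    refine hNo _ _ ((bJ_eq_one_iff m I hn1).mp e1) ((bJ_eq_one_iff m I hn2).mp e2) ?_
    rw [JGraph, SimpleGraph.fromRel_adj]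
    constructor
    · simp only [Jb, ne_eq, Sum.inr.injEq, Sum.inl.injEq, Fin.mk.injEq]
      omega
    · left
      show (0 : ℕ) = ((m - 1) + 1) % m
      have : m - 1 + 1 = m := by omega
      rw [this, Nat.mod_self]
  -- the two coupling edges
  have hAB0 : aJ m I 0 + bJ m I 0 ≤ 1 := by
    by_contra hcon
    push_neg at hcon
    have h1 := aJ_le_one m I 0
    have h2 := bJ_le_one m I 0
    have e1 : aJ m I 0 = 1 := by omega
    have e2 : bJ m I 0 = 1 := by omega
    have hn : (0 : ℕ) < m := by omega
    refine hNo _ _ ((aJ_eq_one_iff m I hn).mp e1) ((bJ_eq_one_iff m I hn).mp e2) ?_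
    rw [JGraph, SimpleGraph.fromRel_adj]
    refine ⟨by simp [Ja, Jb], Or.inl ?_⟩
    left
    exact ⟨rfl, rfl⟩
  have hABL : aJ m I (m - 1) + bJ m I (m - 1) ≤ 1 := by
    by_contra hcon
    push_neg at hcon
    have h1 := aJ_le_one m I (m - 1)
    have h2 := bJ_le_one m I (m - 1)
    have e1 : aJ m I (m - 1) = 1 := by omega
    have e2 : bJ m I (m - 1) = 1 := by omega
    have hn : m - 1 < m := by omega
    refine hNo _ _ ((aJ_eq_one_iff m I hn).mp e1) ((bJ_eq_one_iff m I hn).mp e2) ?_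
    rw [JGraph, SimpleGraph.fromRel_adj]
    refine ⟨by simp [Ja, Jb], Or.inl ?_⟩
    right
    exact ⟨rfl, rfl⟩
  -- the c constraints
  have hC : ∀ n : ℕ, n < m - 1 → cJ m I n = 1 →
      aJ m I n = 0 ∧ aJ m I (n + 1) = 0 ∧ bJ m I n = 0 ∧ bJ m I (n + 1) = 0 := by
    intro n hn e
    have hcmem : Jc ⟨n, hn⟩ ∈ I := (cJ_eq_one_iff m I hn).mp e
    have hn1 : n < m := by omega
    have hn2 : n + 1 < m := by omega
    refine ⟨?_, ?_, ?_, ?_⟩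
    · by_contra h
      have h1 := aJ_le_one m I n
      have e1 : aJ m I n = 1 := by omega
      refine hNo _ _ hcmem ((aJ_eq_one_iff m I hn1).mp e1) ?_
      rw [JGraph, SimpleGraph.fromRel_adj]
      refine ⟨by simp [Ja, Jc], Or.inl ?_⟩
      left; rfl
    · by_contra h
      have h1 := aJ_le_one m I (n + 1)
      have e1 : aJ m I (n + 1) = 1 := by omega
      refine hNo _ _ hcmem ((aJ_eq_one_iff m I hn2).mp e1) ?_
      rw [JGraph, SimpleGraph.fromRel_adj]
      refine ⟨by simp [Ja, Jc], Or.inl ?_⟩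
      right; rfl
    · by_contra h
      have h1 := bJ_le_one m I n
      have e1 : bJ m I n = 1 := by omega
      refine hNo _ _ hcmem ((bJ_eq_one_iff m I hn1).mp e1) ?_
      rw [JGraph, SimpleGraph.fromRel_adj]
      refine ⟨by simp [Jb, Jc], Or.inl ?_⟩
      left; rfl
    · by_contra h
      have h1 := bJ_le_one m I (n + 1)
      have e1 : bJ m I (n + 1) = 1 := by omega
      refine hNo _ _ hcmem ((bJ_eq_one_iff m I hn2).mp e1) ?_
      rw [JGraph, SimpleGraph.fromRel_adj]
      refine ⟨by simp [Jb, Jc], Or.inl ?_⟩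
      right; rfl
  -- counting: the card decomposes
  have hcardsum : (∑ n ∈ Finset.range m, aJ m I n) + (∑ n ∈ Finset.range m, bJ m I n)
      + (∑ n ∈ Finset.range (m - 1), cJ m I n) = I.card := by
    have h0 : I.card = ∑ v : JVert m, (if v ∈ I then 1 else 0) := by
      rw [Finset.sum_ite_mem, Finset.univ_inter]
      exact Finset.card_eq_sum_ones I
    rw [h0, Fintype.sum_sum_type, Fintype.sum_sum_type]
    have ea : ∑ i : Fin m, (if (Sum.inl i : JVert m) ∈ I then 1 else 0)
        = ∑ n ∈ Finset.range m, aJ m I n := by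
      rw [← Fin.sum_univ_eq_sum_range (fun n => aJ m I n) m]
      refine Finset.sum_congr rfl fun i _ => ?_
      simp [aJ, i.isLt, Ja]
      congr
    have eb : ∑ i : Fin m, (if (Sum.inr (Sum.inl i) : JVert m) ∈ I then 1 else 0)
        = ∑ n ∈ Finset.range m, bJ m I n := by
      rw [← Fin.sum_univ_eq_sum_range (fun n => bJ m I n) m]
      refine Finset.sum_congr rfl fun i _ => ?_
      simp [bJ, i.isLt, Jb]
      congr
    have ec : ∑ i : Fin (m - 1), (if (Sum.inr (Sum.inr i) : JVert m) ∈ I then 1 else 0)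
        = ∑ n ∈ Finset.range (m - 1), cJ m I n := by
      rw [← Fin.sum_univ_eq_sum_range (fun n => cJ m I n) (m - 1)]
      refine Finset.sum_congr rfl fun i _ => ?_
      simp [cJ, i.isLt, Jc]
      congr
    rw [ea, eb, ec]
    ring
  -- rotation invariance of sums
  have hrot : ∀ f : ℕ → ℕ, ∑ n ∈ Finset.range m, f ((n + 1) % m) = ∑ n ∈ Finset.range m, f n := by
    intro f
    obtain ⟨M, hM⟩ : ∃ M, m = M + 1 := ⟨m - 1, by omega⟩
    subst hM
    rw [Finset.sum_range_succ, Finset.sum_range_succ' (fun n => f n) M]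
    congr 1
    · refine Finset.sum_congr rfl fun n hn => ?_
      rw [Finset.mem_range] at hn
      rw [Nat.mod_eq_of_lt (by omega)]
    · rw [Nat.mod_self]
  have hcext : ∑ n ∈ Finset.range m, cJ m I n = ∑ n ∈ Finset.range (m - 1), cJ m I n := by
    symm
    refine Finset.sum_subset (Finset.range_subset_range.mpr (by omega)) fun n _ hn => ?_
    rw [Finset.mem_range, not_lt] at hn
    unfold cJ
    rw [dif_neg (by omega)]
  -- total weight
  have hS1 : ∑ n ∈ Finset.range m, wJ m I n = 2 * I.card := by
    unfold wJ
    rw [Finset.sum_add_distrib, Finset.sum_add_distrib, Finset.sum_add_distrib,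
      Finset.sum_add_distrib, ← Finset.mul_sum, hrot (aJ m I), hrot (bJ m I), hcext,
      ← hcardsum]
    ring
  -- each weight is at most 2
  have hWle : ∀ n ∈ Finset.range m, wJ m I n ≤ 2 := by
    intro n hn
    rw [Finset.mem_range] at hn
    unfold wJ
    by_cases hc : cJ m I n = 1
    · have hn' : n < m - 1 := by
        by_contra h
        rw [not_lt] at h
        unfold cJ at hc
        rw [dif_neg (by omega)] at hc
        omega
      obtain ⟨z1, z2, z3, z4⟩ := hC n hn' hc
      have hmod : (n + 1) % m = n + 1 := Nat.mod_eq_of_lt (by omega)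
      rw [hmod, z1, z2, z3, z4, hc]
    · have hc0 : cJ m I n = 0 := by have := cJ_le_one m I n; omega
      rw [hc0]
      rcases Nat.lt_or_ge (n + 1) m with hlt | hge
      · have hmod : (n + 1) % m = n + 1 := Nat.mod_eq_of_lt hlt
        rw [hmod]
        have := hA n hlt
        have := hB n hlt
        omega
      · have hn1 : n = m - 1 := by omega
        have hmod : (n + 1) % m = 0 := by
          have : n + 1 = m := by omega
          rw [this, Nat.mod_self]
        rw [hmod, hn1]
        have := hA0
        have := hB0
        omega
  -- all weights equal 2
  have hW2 : ∀ n ∈ Finset.range m, wJ m I n = 2 := by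
    intro n hn
    by_contra hne
    have hlt : wJ m I n < 2 := lt_of_le_of_ne (hWle n hn) hne
    have hsl : ∑ n ∈ Finset.range m, wJ m I n < ∑ _n ∈ Finset.range m, 2 :=
      Finset.sum_lt_sum hWle ⟨n, hn, hlt⟩
    rw [hS1, Finset.sum_const, Finset.card_range, smul_eq_mul] at hsl
    omega
  -- edge dichotomy
  have hedge : ∀ n : ℕ, n < m →
      (aJ m I n = 0 ∧ aJ m I ((n + 1) % m) = 0 ∧ bJ m I n = 0 ∧ bJ m I ((n + 1) % m) = 0)
      ∨ (aJ m I n + aJ m I ((n + 1) % m) = 1 ∧ bJ m I n + bJ m I ((n + 1) % m) = 1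
          ∧ cJ m I n = 0) := by
    intro n hn
    have hw := hW2 n (Finset.mem_range.mpr hn)
    unfold wJ at hw
    by_cases hc : cJ m I n = 1
    · left
      have hn' : n < m - 1 := by
        by_contra h
        rw [not_lt] at h
        unfold cJ at hc
        rw [dif_neg (by omega)] at hc
        omega
      obtain ⟨z1, z2, z3, z4⟩ := hC n hn' hc
      have hmod : (n + 1) % m = n + 1 := Nat.mod_eq_of_lt (by omega)
      rw [hmod]
      exact ⟨z1, z2, z3, z4⟩
    · right
      have hc0 : cJ m I n = 0 := by have := cJ_le_one m I n; omega
      refine ⟨?_, ?_, hc0⟩ <;>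
      · rw [hc0] at hw
        rcases Nat.lt_or_ge (n + 1) m with hlt | hge
        · have hmod : (n + 1) % m = n + 1 := Nat.mod_eq_of_lt hlt
          rw [hmod] at hw ⊢
          have := hA n hlt
          have := hB n hlt
          omega
        · have hn1 : n = m - 1 := by omega
          have hmod : (n + 1) % m = 0 := by
            have : n + 1 = m := by omega
            rw [this, Nat.mod_self]
          rw [hmod] at hw ⊢
          rw [hn1] at hw ⊢
          have := hA0
          have := hB0
          omega
  -- final case analysis
  by_cases hP : aJ m I 0 = bJ m I 0
  · -- the wrap edge gives a contradiction
    have hwrap := hedge (m - 1) (by omega)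
    have hmod : (m - 1 + 1) % m = 0 := by
      have : m - 1 + 1 = m := by omega
      rw [this, Nat.mod_self]
    rw [hmod] at hwrap
    have hcL : cJ m I (m - 1) = 0 := by
      unfold cJ
      rw [dif_neg (by omega)]
    have h1 := aJ_le_one m I 0
    have h2 := bJ_le_one m I 0
    rcases hwrap with ⟨z1, z2, z3, z4⟩ | ⟨s1, s2, -⟩
    · -- left case: then the wrap weight is not 2
      have hw := hW2 (m - 1) (Finset.mem_range.mpr (by omega))
      unfold wJ at hw
      rw [hmod, z1, z2, z3, z4, hcL] at hw
      omega
    · -- a 0 = b 0 = 0 from coupling edge, then a(m-1)=b(m-1)=1, contradicting hABL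
      omega
  · -- a and b differ everywhere; then no c is used and a alternates around an odd cycle
    have hall : ∀ n : ℕ, n < m → aJ m I n ≠ bJ m I n := by
      intro n
      induction n with
      | zero => exact fun _ => hP
      | succ k ih =>
        intro hk
        have hk' : k < m := by omega
        have ihk := ih (by omega)
        have hmod : (k + 1) % m = k + 1 := Nat.mod_eq_of_lt hk
        rcases hedge k hk' with ⟨z1, -, z3, -⟩ | ⟨s1, s2, -⟩
        · exact absurd (z1.trans z3.symm) ihk
        · rw [hmod] at s1 s2
          have ha1 := aJ_le_one m I k
          have hb1 := bJ_le_one m I k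
          omega
    have hflip : ∀ n ∈ Finset.range m, aJ m I n + aJ m I ((n + 1) % m) = 1 := by
      intro n hn
      rw [Finset.mem_range] at hn
      rcases hedge n hn with ⟨z1, -, z3, -⟩ | ⟨s1, -, -⟩
      · exact absurd (z1.trans z3.symm) (hall n hn)
      · exact s1
    have hsum1 : ∑ n ∈ Finset.range m, (aJ m I n + aJ m I ((n + 1) % m))
        = ∑ _n ∈ Finset.range m, 1 := Finset.sum_congr rfl hflip
    rw [Finset.sum_add_distrib, hrot (aJ m I), Finset.sum_const, Finset.card_range,
      smul_eq_mul, mul_one] at hsum1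
    obtain ⟨t, ht⟩ := hodd
    omega

/-- For every odd `m ≥ 3`, the independence number of `J_m` equals `m - 1`. -/
theorem stmt_4 (m : ℕ) (hm : 3 ≤ m) (hodd : Odd m) :
    (∃ I : Finset (JVert m), IsIndepSet (JGraph m) ↑I ∧ I.card = m - 1) ∧
    (∀ I : Finset (JVert m), IsIndepSet (JGraph m) ↑I → I.card ≤ m - 1) := by
  constructor
  · refine ⟨Finset.univ.image Jc, ?_, ?_⟩
    · intro u hu v hv hne hadj
      simp only [Finset.coe_image, Set.mem_image, Finset.mem_coe] at hu hv
      obtain ⟨i, -, rfl⟩ := hu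
      obtain ⟨j, -, rfl⟩ := hv
      rw [JGraph, SimpleGraph.fromRel_adj] at hadj
      exact hadj.2.elim id id
    · rw [Finset.card_image_of_injective _ (fun i j h => by
        simpa [Jc] using h)]
      simp
  · exact fun I hI => J_upper m hm hodd I hI
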